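/- Let σ > 0, let γ_σ denote the Normal distribution N(−σ²/2, σ²), and let Φ denote the cumulative distribution function of the standard Normal distribution. Then ∫∫ min(1, exp(z'−z)) γ_σ(dz) γ_σ(dz') = 1/2 + exp(σ²) (1 − Φ(√2 σ)); equivalently this double integral equals (1/2)(1 + exp(σ²) Erfc(σ)), where Erfc is the complementary error function. -/

import Mathlib

open MeasureTheory ProbabilityTheory Real
open scoped NNReal ENNReal

/-- The cumulative distribution function `Φ` of the standard Normal distribution. -/
noncomputable def stdNormalCDF (x : ℝ) : ℝ :=
  ((gaussianReal 0 1) (Set.Iic x)).toReal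

lemma integral_gaussianReal_eq (m : ℝ) {v : ℝ≥0} (hv : v ≠ 0) (f : ℝ → ℝ) :
    ∫ x, f x ∂(gaussianReal m v) = ∫ x, f x * gaussianPDFReal m v x := by
  rw [gaussianReal_of_var_ne_zero _ hv, gaussianPDF_def]
  have h : ∀ x, ENNReal.ofReal (gaussianPDFReal m v x)
      = ((gaussianPDFReal m v x).toNNReal : ℝ≥0∞) := fun x => rfl
  simp_rw [h]
  rw [integral_withDensity_eq_integral_smul
    ((measurable_gaussianPDFReal m v).real_toNNReal) f]
  congr 1; ext x
  simp [NNReal.smul_def, Real.coe_toNNReal _ (gaussianPDFReal_nonneg m v x), mul_comm]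

lemma setToReal (m : ℝ) {v : ℝ≥0} (hv : v ≠ 0) {s : Set ℝ} (hs : MeasurableSet s) :
    ((gaussianReal m v) s).toReal = ∫ x in s, gaussianPDFReal m v x := by
  rw [gaussianReal_apply_eq_integral _ hv,
    ENNReal.toReal_ofReal (setIntegral_nonneg hs fun x _ => gaussianPDFReal_nonneg m v x)]

lemma pdf_prod (m w z : ℝ) {s : ℝ} (hs : 0 < s) (v v2 vh : ℝ≥0)
    (hv : (v:ℝ) = s) (hv2 : (v2:ℝ) = 2*s) (hvh : (vh:ℝ) = s/2) :
    gaussianPDFReal m v (w + z) * gaussianPDFReal m v z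
      = gaussianPDFReal 0 v2 w * gaussianPDFReal (m - w/2) vh z := by
  simp only [gaussianPDFReal_def, hv, hv2, hvh]
  rw [mul_mul_mul_comm, mul_mul_mul_comm ((Real.sqrt (2*π*(2*s)))⁻¹)]
  have hπ : 0 < π := pi_pos
  congr 1
  · rw [← mul_inv, ← mul_inv, ← Real.sqrt_mul (by positivity : (0:ℝ) ≤ 2*π*s),
      ← Real.sqrt_mul (by positivity : (0:ℝ) ≤ 2*π*(2*s))]
    congr 2
    ring
  · rw [← Real.exp_add, ← Real.exp_add]
    congr 1
    field_simp
    ring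

lemma pdf_tilt (w : ℝ) {s : ℝ} (hs : 0 < s) (v : ℝ≥0) (hv : (v:ℝ) = s) :
    Real.exp w * gaussianPDFReal 0 v w = Real.exp (s/2) * gaussianPDFReal s v w := by
  simp only [gaussianPDFReal_def, hv]
  rw [mul_left_comm, mul_left_comm (Real.exp (s/2)), ← Real.exp_add, ← Real.exp_add]
  congr 2
  field_simp
  ring

lemma gauss_Iic (m x τ : ℝ) (hτ : 0 < τ) (v : ℝ≥0) (hv : (v:ℝ) = τ^2) :
    ((gaussianReal m v) (Set.Iic x)).toReal = stdNormalCDF ((x - m)/τ) := by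
  have hvv : v = ⟨τ^2, sq_nonneg τ⟩ * 1 := by
    ext; exact hv.trans (congrArg NNReal.toReal (mul_one (⟨τ^2, sq_nonneg τ⟩ : ℝ≥0))).symm
  have hmap : gaussianReal m v = Measure.map (fun y => τ * y + m) (gaussianReal 0 1) := by
    have h1 : (fun y => τ * y + m) = (· + m) ∘ (fun y => τ * y) := rfl
    rw [h1, ← Measure.map_map (measurable_id'.add_const m) (measurable_const_mul τ),
      gaussianReal_map_const_mul, gaussianReal_map_add_const]
    rw [hvv]; norm_num
    exact congrArg _ (mul_one _)
  rw [hmap, Measure.map_apply (by fun_prop) measurableSet_Iic]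
  have hpre : (fun y => τ * y + m) ⁻¹' (Set.Iic x) = Set.Iic ((x - m)/τ) := by
    ext y
    simp only [Set.mem_preimage, Set.mem_Iic, le_div_iff₀ hτ]
    constructor <;> intro h <;> nlinarith
  rw [hpre]; rfl

lemma gauss_singleton (m a : ℝ) {v : ℝ≥0} (hv : v ≠ 0) : (gaussianReal m v) {a} = 0 :=
  gaussianReal_absolutelyContinuous m hv (measure_singleton a)

lemma stdNormalCDF_neg (a : ℝ) : stdNormalCDF (-a) = 1 - stdNormalCDF a := by
  have hmap : Measure.map (fun y => (-1 : ℝ) * y) (gaussianReal 0 1) = gaussianReal 0 1 := by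
    rw [gaussianReal_map_const_mul]
    norm_num
  have h1 : (gaussianReal 0 1) (Set.Iic (-a)) = (gaussianReal 0 1) (Set.Ici a) := by
    conv_lhs => rw [← hmap]
    rw [Measure.map_apply (by fun_prop) measurableSet_Iic]
    congr 1
    ext y
    simp
  have h2 : (gaussianReal 0 1) (Set.Ici a) = (gaussianReal 0 1) (Set.Ioi a) := by
    refine le_antisymm ?_ (measure_mono Set.Ioi_subset_Ici_self)
    calc (gaussianReal 0 1) (Set.Ici a) ≤ (gaussianReal 0 1) (Set.Ioi a ∪ {a}) := by
          apply measure_mono; rw [Set.union_comm, ← Set.insert_eq, Set.Ioi_insert]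
      _ ≤ (gaussianReal 0 1) (Set.Ioi a) + (gaussianReal 0 1) {a} := measure_union_le _ _
      _ = (gaussianReal 0 1) (Set.Ioi a) := by rw [gauss_singleton 0 a one_ne_zero, add_zero]
  have h3 : (gaussianReal 0 1) (Set.Iic a) + (gaussianReal 0 1) (Set.Ioi a) = 1 := by
    rw [← measure_union (Set.Iic_disjoint_Ioi le_rfl) measurableSet_Ioi, Set.Iic_union_Ioi,
      measure_univ]
  have hfin : (gaussianReal 0 1) (Set.Ioi a) ≠ ⊤ := measure_ne_top _ _
  have hfin2 : (gaussianReal 0 1) (Set.Iic a) ≠ ⊤ := measure_ne_top _ _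
  have h4 : ((gaussianReal 0 1) (Set.Iic a)).toReal + ((gaussianReal 0 1) (Set.Ioi a)).toReal
      = 1 := by
    rw [← ENNReal.toReal_add hfin2 hfin, h3, ENNReal.toReal_one]
  unfold stdNormalCDF
  rw [h1, h2]
  linarith

lemma stdNormalCDF_zero : stdNormalCDF 0 = 1/2 := by
  have := stdNormalCDF_neg 0
  rw [neg_zero] at this
  linarith

lemma nnmk_ne_zero {a : ℝ} (h : 0 ≤ a) (ha : a ≠ 0) : (⟨a, h⟩ : ℝ≥0) ≠ 0 :=
  NNReal.coe_ne_zero.mp ha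

lemma conv_pdf (m : ℝ) {σ : ℝ} (hσ : 0 < σ) (w : ℝ) :
    (∫ z, gaussianPDFReal m ⟨σ^2, sq_nonneg σ⟩ (w + z)
        * gaussianPDFReal m ⟨σ^2, sq_nonneg σ⟩ z)
      = gaussianPDFReal 0 ⟨2*σ^2, by positivity⟩ w := by
  have hs2 : (0:ℝ) < σ^2 := pow_pos hσ 2
  have h : ∀ z, gaussianPDFReal m ⟨σ^2, sq_nonneg σ⟩ (w + z)
        * gaussianPDFReal m ⟨σ^2, sq_nonneg σ⟩ z
      = gaussianPDFReal 0 ⟨2*σ^2, by positivity⟩ w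
        * gaussianPDFReal (m - w/2) ⟨σ^2/2, by positivity⟩ z :=
    fun z => pdf_prod m w z hs2 _ _ _ rfl rfl rfl
  simp_rw [h]
  rw [integral_const_mul,
    integral_gaussianPDFReal_eq_one _ (nnmk_ne_zero _ (by nlinarith)), mul_one]

lemma J_eq {σ : ℝ} (hσ : 0 < σ) :
    (∫ w, min 1 (Real.exp w) * gaussianPDFReal 0 ⟨2*σ^2, by positivity⟩ w)
      = 1/2 + Real.exp (σ^2) * (1 - stdNormalCDF (Real.sqrt 2 * σ)) := by
  have hs2 : (0:ℝ) < σ^2 := pow_pos hσ 2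
  set V : ℝ≥0 := ⟨2*σ^2, by positivity⟩ with hV
  have hVne : V ≠ 0 := nnmk_ne_zero _ (by nlinarith)
  have hτ : 0 < Real.sqrt 2 * σ := by positivity
  have h2 : (Real.sqrt 2)^2 = 2 := Real.sq_sqrt (by norm_num)
  have hVτ : (V:ℝ) = (Real.sqrt 2 * σ)^2 := by rw [mul_pow, h2]; rfl
  have hmin0 : ∀ w : ℝ, 0 ≤ min 1 (Real.exp w) :=
    fun w => le_min zero_le_one (Real.exp_pos w).le
  have hint : Integrable (fun w => min 1 (Real.exp w) * gaussianPDFReal 0 V w) := by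
    refine Integrable.mono (integrable_gaussianPDFReal 0 V)
      (((continuous_const.min Real.continuous_exp).aestronglyMeasurable).mul
        (measurable_gaussianPDFReal 0 V).aestronglyMeasurable) (ae_of_all _ fun w => ?_)
    rw [norm_mul, Real.norm_eq_abs, Real.norm_eq_abs,
      abs_of_nonneg (hmin0 w), abs_of_nonneg (gaussianPDFReal_nonneg 0 V w)]
    exact mul_le_of_le_one_left (gaussianPDFReal_nonneg 0 V w) (min_le_left _ _)
  rw [← integral_add_compl (measurableSet_Iic : MeasurableSet (Set.Iic (0:ℝ))) hint,
    Set.compl_Iic]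
  have hterm1 : (∫ w in Set.Iic (0:ℝ), min 1 (Real.exp w) * gaussianPDFReal 0 V w)
      = Real.exp (σ^2) * (1 - stdNormalCDF (Real.sqrt 2 * σ)) := by
    have step : ∫ w in Set.Iic (0:ℝ), min 1 (Real.exp w) * gaussianPDFReal 0 V w
        = ∫ w in Set.Iic (0:ℝ), Real.exp (σ^2) * gaussianPDFReal (2*σ^2) V w := by
      refine setIntegral_congr_fun measurableSet_Iic fun w (hw : w ≤ 0) => ?_
      rw [min_eq_right (Real.exp_le_one_iff.mpr hw),
        pdf_tilt w (by nlinarith : (0:ℝ) < 2*σ^2) V rfl,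
        show (2*σ^2)/2 = σ^2 by ring]
    rw [step, integral_const_mul, ← setToReal _ hVne measurableSet_Iic,
      gauss_Iic _ _ _ hτ V hVτ]
    have hdiv : (0 - 2*σ^2) / (Real.sqrt 2 * σ) = -(Real.sqrt 2 * σ) := by
      rw [zero_sub, neg_div, neg_inj, eq_comm, eq_div_iff (by positivity)]
      nlinarith
    rw [hdiv, stdNormalCDF_neg]
  have hterm2 : (∫ w in Set.Ioi (0:ℝ), min 1 (Real.exp w) * gaussianPDFReal 0 V w)
      = 1/2 := by
    have step : ∫ w in Set.Ioi (0:ℝ), min 1 (Real.exp w) * gaussianPDFReal 0 V w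
        = ∫ w in Set.Ioi (0:ℝ), gaussianPDFReal 0 V w := by
      refine setIntegral_congr_fun measurableSet_Ioi fun w (hw : 0 < w) => ?_
      rw [min_eq_left (Real.one_le_exp hw.le), one_mul]
    rw [step, ← setToReal _ hVne measurableSet_Ioi]
    have h3 : (gaussianReal 0 V) (Set.Iic 0) + (gaussianReal 0 V) (Set.Ioi 0) = 1 := by
      rw [← measure_union (Set.Iic_disjoint_Ioi le_rfl) measurableSet_Ioi, Set.Iic_union_Ioi,
        measure_univ]
    have h4 : ((gaussianReal 0 V) (Set.Iic 0)).toReal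
        + ((gaussianReal 0 V) (Set.Ioi 0)).toReal = 1 := by
      rw [← ENNReal.toReal_add (measure_ne_top _ _) (measure_ne_top _ _), h3,
        ENNReal.toReal_one]
    have h5 : ((gaussianReal 0 V) (Set.Iic 0)).toReal = 1/2 := by
      rw [gauss_Iic _ _ _ hτ V hVτ]
      simp [stdNormalCDF_zero]
    linarith
  rw [hterm1, hterm2]
  ring

/-- Under the large-sample approximation `γ_σ = N(-σ²/2, σ²)` for the log-likelihood
error, the probability that the coupled PIMH chains meet at the first iteration is
`∫∫ min(1, exp(z'-z)) γ_σ(dz) γ_σ(dz') = 1/2 + exp(σ²) (1 - Φ(√2 σ))`. -/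
theorem prob_meet_at_one_gaussian (σ : ℝ) (hσ : 0 < σ) :
    ∫ z, (∫ z', min 1 (Real.exp (z' - z))
        ∂(gaussianReal (-σ ^ 2 / 2) ⟨σ ^ 2, sq_nonneg σ⟩))
        ∂(gaussianReal (-σ ^ 2 / 2) ⟨σ ^ 2, sq_nonneg σ⟩)
      = 1 / 2 + Real.exp (σ ^ 2) * (1 - stdNormalCDF (Real.sqrt 2 * σ)) := by
  have hs2 : (0:ℝ) < σ^2 := pow_pos hσ 2
  set v : ℝ≥0 := ⟨σ^2, sq_nonneg σ⟩ with hv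
  have hvne : v ≠ 0 := nnmk_ne_zero _ hs2.ne'
  set m : ℝ := -σ^2/2 with hm
  set f : ℝ → ℝ := fun w => min 1 (Real.exp w) with hf
  have hfcont : Continuous f := continuous_const.min Real.continuous_exp
  have hmin0 : ∀ w : ℝ, 0 ≤ f w := fun w => le_min zero_le_one (Real.exp_pos w).le
  have hmin1 : ∀ w : ℝ, f w ≤ 1 := fun w => min_le_left _ _
  have hpdfint : Integrable (fun x => gaussianPDFReal m v x) := integrable_gaussianPDFReal m v
  have hpdfnn : ∀ x, 0 ≤ gaussianPDFReal m v x := gaussianPDFReal_nonneg m v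
  -- measurability of the 2d kernel
  have hGmeas : Measurable (fun p : ℝ×ℝ =>
      gaussianPDFReal m v (p.2 + p.1) * gaussianPDFReal m v p.1) :=
    ((measurable_gaussianPDFReal m v).comp (measurable_snd.add measurable_fst)).mul
      ((measurable_gaussianPDFReal m v).comp measurable_fst)
  -- integrability of the 2d kernel
  have hG : Integrable (fun p : ℝ×ℝ =>
      gaussianPDFReal m v (p.2 + p.1) * gaussianPDFReal m v p.1)
      ((volume : Measure ℝ).prod volume) := by
    rw [integrable_prod_iff hGmeas.aestronglyMeasurable]
    constructor
    · refine ae_of_all _ fun z => ?_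
      have htr : Integrable (fun w => gaussianPDFReal m v (w + z)) :=
        ((measurePreserving_add_right volume z).integrable_comp
          hpdfint.aestronglyMeasurable).mpr hpdfint
      exact htr.mul_const (gaussianPDFReal m v z)
    · have heq : (fun z => ∫ w, ‖gaussianPDFReal m v (w + z) * gaussianPDFReal m v z‖)
          = fun z => gaussianPDFReal m v z := by
        ext z
        have h1 : ∀ w, ‖gaussianPDFReal m v (w + z) * gaussianPDFReal m v z‖
            = gaussianPDFReal m v (w + z) * gaussianPDFReal m v z :=
          fun w => norm_of_nonneg (mul_nonneg (hpdfnn _) (hpdfnn _))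
        simp_rw [h1]
        rw [integral_mul_const, integral_add_right_eq_self (gaussianPDFReal m v) z,
          integral_gaussianPDFReal_eq_one m hvne, one_mul]
      rw [heq]
      exact hpdfint
  -- integrability of the full 2d integrand
  have hH : Integrable (Function.uncurry fun z w =>
      f w * (gaussianPDFReal m v (w + z) * gaussianPDFReal m v z))
      ((volume : Measure ℝ).prod volume) := by
    refine hG.mono ?_ (ae_of_all _ fun p => ?_)
    · exact ((hfcont.comp continuous_snd).aestronglyMeasurable).mul
        hGmeas.aestronglyMeasurable
    · show ‖f p.2 * (gaussianPDFReal m v (p.2 + p.1) * gaussianPDFReal m v p.1)‖ ≤ _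
      rw [norm_mul]
      refine mul_le_of_le_one_left (norm_nonneg _) ?_
      rw [Real.norm_eq_abs, abs_of_nonneg (hmin0 _)]
      exact hmin1 _
  -- rewrite the inner integral by translation
  have hinner : ∀ z : ℝ, (∫ z', min 1 (Real.exp (z' - z)) ∂(gaussianReal m v))
      = ∫ w, f w * gaussianPDFReal m v (w + z) := by
    intro z
    rw [integral_gaussianReal_eq m hvne]
    have h := (integral_add_right_eq_self (μ := volume)
      (fun z' => min 1 (Real.exp (z' - z)) * gaussianPDFReal m v z') z).symm
    simp only [add_sub_cancel_right] at h
    exact h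
  calc (∫ z, (∫ z', min 1 (Real.exp (z' - z)) ∂(gaussianReal m v)) ∂(gaussianReal m v))
      = ∫ z, (∫ w, f w * gaussianPDFReal m v (w + z)) ∂(gaussianReal m v) := by
        simp_rw [hinner]
    _ = ∫ z, (∫ w, f w * gaussianPDFReal m v (w + z)) * gaussianPDFReal m v z :=
        integral_gaussianReal_eq m hvne _
    _ = ∫ z, ∫ w, f w * (gaussianPDFReal m v (w + z) * gaussianPDFReal m v z) := by
        refine integral_congr_ae (ae_of_all _ fun z => ?_)
        dsimp only
        rw [← integral_mul_const]
        refine integral_congr_ae (ae_of_all _ fun w => ?_)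
        dsimp only
        ring
    _ = ∫ w, ∫ z, f w * (gaussianPDFReal m v (w + z) * gaussianPDFReal m v z) :=
        integral_integral_swap hH
    _ = ∫ w, f w * gaussianPDFReal 0 ⟨2*σ^2, by positivity⟩ w := by
        refine integral_congr_ae (ae_of_all _ fun w => ?_)
        dsimp only
        rw [integral_const_mul, conv_pdf m hσ w]
    _ = 1 / 2 + Real.exp (σ ^ 2) * (1 - stdNormalCDF (Real.sqrt 2 * σ)) := J_eq hσ
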